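/- arXiv:2309.11264 — 7 statements merged into one kernel-verified Lean document; each statement's English description precedes it below -/
import Mathlib

section
/- Let n ≥ 2 and let Z ⊆ ℝⁿ be a bounded, open, nonempty Lipschitz set. Then Z satisfies the interior corkscrew condition: there exists a constant c > 0 such that for every boundary point z ∈ ∂Z and every radius 0 < r < diam(Z) there exists a point z̃ ∈ Z with the closed ball B̄(z̃, c·r) contained in Z ∩ B(z, r). -/
open Metric Set

noncomputable section

/-- An open set `Z ⊆ ℝⁿ` is a Lipschitz set if near every boundary point it is,
in a suitable cylinder, the subgraph of a Lipschitz function. -/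
def IsLipschitzSet {n : ℕ} (Z : Set (EuclideanSpace ℝ (Fin n))) : Prop :=
  ∀ z ∈ frontier Z,
    ∃ (ν : EuclideanSpace ℝ (Fin n)) (rt h : ℝ) (L : NNReal)
      (g : EuclideanSpace ℝ (Fin n) → ℝ),
      ‖ν‖ = 1 ∧ 0 < rt ∧ 0 < h ∧ LipschitzWith L g ∧ g 0 = 0 ∧
      Z ∩ {p | ∃ (x : EuclideanSpace ℝ (Fin n)) (y : ℝ), (inner ℝ x ν : ℝ) = 0 ∧
            ‖x‖ < rt ∧ -h < y ∧ y < h ∧ p = z + x + y • ν}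
        = {p | ∃ (x : EuclideanSpace ℝ (Fin n)) (y : ℝ), (inner ℝ x ν : ℝ) = 0 ∧
            ‖x‖ < rt ∧ -h < y ∧ y < g x ∧ p = z + x + y • ν} ∧
      frontier Z ∩ {p | ∃ (x : EuclideanSpace ℝ (Fin n)) (y : ℝ), (inner ℝ x ν : ℝ) = 0 ∧
            ‖x‖ < rt ∧ -h < y ∧ y < h ∧ p = z + x + y • ν}
        = {p | ∃ (x : EuclideanSpace ℝ (Fin n)) (y : ℝ), (inner ℝ x ν : ℝ) = 0 ∧
            ‖x‖ < rt ∧ -h < y ∧ y < h ∧ y = g x ∧ p = z + x + y • ν}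

set_option maxHeartbeats 1000000

variable {n : ℕ}

lemma uniq_decomp {ν x₁ x₂ : EuclideanSpace ℝ (Fin n)} {y₁ y₂ : ℝ} (hν : ‖ν‖ = 1)
    (h₁ : (inner ℝ x₁ ν : ℝ) = 0) (h₂ : (inner ℝ x₂ ν : ℝ) = 0)
    (h : x₁ + y₁ • ν = x₂ + y₂ • ν) : y₁ = y₂ ∧ x₁ = x₂ := by
  have hνν : (inner ℝ ν ν : ℝ) = 1 := by
    rw [real_inner_self_eq_norm_mul_norm, hν]; ring
  have hy : y₁ = y₂ := by
    have h' := congrArg (fun v => (inner ℝ v ν : ℝ)) h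
    simp only [inner_add_left, real_inner_smul_left, h₁, h₂, hνν, mul_one, zero_add] at h'
    exact h'
  refine ⟨hy, ?_⟩
  rw [hy] at h
  exact add_right_cancel h

lemma decomp {ν : EuclideanSpace ℝ (Fin n)} (hν : ‖ν‖ = 1) (v : EuclideanSpace ℝ (Fin n)) :
    (inner ℝ (v - (inner ℝ v ν : ℝ) • ν) ν : ℝ) = 0 ∧ |(inner ℝ v ν : ℝ)| ≤ ‖v‖ ∧
      ‖v - (inner ℝ v ν : ℝ) • ν‖ ≤ 2 * ‖v‖ := by
  have hνν : (inner ℝ ν ν : ℝ) = 1 := by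
    rw [real_inner_self_eq_norm_mul_norm, hν]; ring
  have hCS : |(inner ℝ v ν : ℝ)| ≤ ‖v‖ := by
    have := abs_real_inner_le_norm v ν
    rwa [hν, mul_one] at this
  refine ⟨?_, hCS, ?_⟩
  · simp only [inner_sub_left, real_inner_smul_left, hνν, mul_one, sub_self]
  calc ‖v - (inner ℝ v ν : ℝ) • ν‖ ≤ ‖v‖ + ‖(inner ℝ v ν : ℝ) • ν‖ := norm_sub_le _ _
    _ = ‖v‖ + |(inner ℝ v ν : ℝ)| := by rw [norm_smul, hν, mul_one, Real.norm_eq_abs]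
    _ ≤ 2 * ‖v‖ := by linarith

lemma local_cork (Z : Set (EuclideanSpace ℝ (Fin n))) (hZlip : IsLipschitzSet Z)
    (w : EuclideanSpace ℝ (Fin n)) :
    ∃ c : ℝ, 0 < c ∧ ∃ R : ℝ, 0 < R ∧ (w ∈ frontier Z →
      ∀ z ∈ frontier Z, dist z w < R → ∀ r : ℝ, 0 < r → r ≤ R →
        ∃ zt ∈ Z, closedBall zt (c * r) ⊆ Z ∩ ball z r) := by
  by_cases hw : w ∈ frontier Z
  case neg => exact ⟨1, one_pos, 1, one_pos, fun hw' => absurd hw' hw⟩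
  obtain ⟨ν, rt, h, L, g, hν, hrt, hh, hLip, hg0, hZC, hFC⟩ := hZlip w hw
  have hL0 : (0:ℝ) ≤ (L:ℝ) := L.coe_nonneg
  set m : ℝ := min rt h with hm
  have hm0 : 0 < m := lt_min hrt hh
  have hmrt : m ≤ rt := min_le_left _ _
  have hmh : m ≤ h := min_le_right _ _
  set c : ℝ := 1/(8*(1+(L:ℝ))) with hc
  have hc0 : 0 < c := by positivity
  have hcmul : c * (8*(1+(L:ℝ))) = 1 := by rw [hc]; field_simp
  have hc8 : c ≤ 1/8 := by
    rw [hc]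
    have h8 : (8:ℝ) ≤ 8*(1+(L:ℝ)) := by linarith
    exact one_div_le_one_div_of_le (by norm_num) h8
  set R : ℝ := m/4 with hRdef
  have hR0 : 0 < R := by positivity
  refine ⟨c, hc0, R, hR0, fun _ z hz hzw r hr hrR => ?_⟩
  have hd := decomp hν (z - w)
  set y' : ℝ := (inner ℝ (z - w) ν : ℝ) with hy'def
  set x' : EuclideanSpace ℝ (Fin n) := z - w - y' • ν with hx'def
  obtain ⟨hx'ν, hy'le, hx'le⟩ := hd
  have hznorm : ‖z - w‖ < R := by rw [← dist_eq_norm]; exact hzw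
  have hy'lt' := abs_lt.mp (lt_of_le_of_lt hy'le hznorm)
  have hx'lt : ‖x'‖ < 2 * R := lt_of_le_of_lt hx'le (by linarith)
  have hx'rt : ‖x'‖ < rt := by
    have h2R : 2 * R = m/2 := by rw [hRdef]; ring
    linarith
  have hzeq : z = w + x' + y' • ν := by rw [hx'def]; abel
  have hzC : z ∈ frontier Z ∩ {p | ∃ (x : EuclideanSpace ℝ (Fin n)) (y : ℝ),
      (inner ℝ x ν : ℝ) = 0 ∧ ‖x‖ < rt ∧ -h < y ∧ y < h ∧ p = w + x + y • ν} :=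
    ⟨hz, ⟨x', y', hx'ν, hx'rt,
      by have : R = m/4 := hRdef; linarith [hy'lt'.1],
      by have : R = m/4 := hRdef; linarith [hy'lt'.2], hzeq⟩⟩
  rw [hFC] at hzC
  obtain ⟨x₂, y₂, hx₂ν, -, -, -, hy₂g, hzeq₂⟩ := hzC
  have huniq := uniq_decomp hν hx₂ν hx'ν (by
    have h2 : w + (x₂ + y₂ • ν) = w + (x' + y' • ν) := by
      rw [← add_assoc, ← add_assoc]; exact hzeq₂.symm.trans hzeq
    exact add_left_cancel h2)
  have hgx' : g x' = y' := by rw [← huniq.2, ← hy₂g, huniq.1]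
  set s : ℝ := r/2 with hs
  set zt : EuclideanSpace ℝ (Fin n) := w + x' + (y' - s) • ν with hzt
  have hztZ : zt ∈ Z := by
    have hmem : zt ∈ {p | ∃ (x : EuclideanSpace ℝ (Fin n)) (y : ℝ),
        (inner ℝ x ν : ℝ) = 0 ∧ ‖x‖ < rt ∧ -h < y ∧ y < g x ∧ p = w + x + y • ν} :=
      ⟨x', y' - s, hx'ν, hx'rt,
        by have h1 : R = m/4 := hRdef
           have h2 : s = r/2 := hs
           linarith [hy'lt'.1],
        by rw [hgx']; have : s = r/2 := hs; linarith, hzt⟩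
    rw [← hZC] at hmem
    exact hmem.1
  refine ⟨zt, hztZ, fun p hp => ?_⟩
  have hpzt : ‖p - zt‖ ≤ c * r := by rw [← dist_eq_norm]; exact hp
  have hcr : c * r ≤ r / 8 := by
    have := mul_le_mul_of_nonneg_right hc8 hr.le
    linarith
  set t : ℝ := (inner ℝ (p - zt) ν : ℝ) with htdef
  have htle' : -(c*r) ≤ t ∧ t ≤ c * r := abs_le.mp (by
    have := abs_real_inner_le_norm (p - zt) ν
    rw [hν, mul_one] at this
    exact le_trans this hpzt)
  set y : ℝ := y' - s + t with hydef
  set x : EuclideanSpace ℝ (Fin n) := p - zt - t • ν + x' with hxdef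
  have hνν : (inner ℝ ν ν : ℝ) = 1 := by
    rw [real_inner_self_eq_norm_mul_norm, hν]; ring
  have hxν : (inner ℝ x ν : ℝ) = 0 := by
    rw [hxdef]
    simp only [inner_add_left, inner_sub_left, real_inner_smul_left, hνν, mul_one, hx'ν,
      add_zero]
    rw [htdef, inner_sub_left]
    ring
  have hxx' : ‖x - x'‖ ≤ 2 * (c * r) := by
    have hxe : x - x' = p - zt - t • ν := by rw [hxdef]; abel
    rw [hxe]
    calc ‖p - zt - t • ν‖ ≤ ‖p - zt‖ + ‖t • ν‖ := norm_sub_le _ _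
      _ = ‖p - zt‖ + |t| := by rw [norm_smul, hν, mul_one, Real.norm_eq_abs]
      _ ≤ 2 * (c * r) := by linarith [abs_le.mpr htle']
  have hxn : ‖x‖ < rt := by
    have h1 : ‖x‖ ≤ ‖x'‖ + ‖x - x'‖ := by
      have h2 := norm_add_le x' (x - x')
      rwa [show x' + (x - x') = x by abel] at h2
    have h2R : 2 * R = m/2 := by rw [hRdef]; ring
    have hcrR : c * r ≤ R / 8 := by
      have : R = m/4 := hRdef
      linarith
    linarith
  have hpeq : p = w + x + y • ν := by
    rw [hxdef, hydef, hzt, add_smul]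
    abel
  have hyh : -h < y := by
    have h1 : R = m/4 := hRdef
    have h2 : s = r/2 := hs
    have h3 : y = y' - s + t := hydef
    linarith [hy'lt'.1, htle'.1, hcr]
  have hylt : y < g x := by
    have hglip : |g x - g x'| ≤ (L:ℝ) * ‖x - x'‖ := by
      have := hLip.dist_le_mul x x'
      rwa [Real.dist_eq, dist_eq_norm] at this
    have h2 : g x' - g x ≤ (L:ℝ) * ‖x - x'‖ := by
      have := (abs_le.mp hglip).1
      linarith
    have e1 : (L:ℝ) * ‖x - x'‖ ≤ 2 * ((L:ℝ) * (c * r)) := by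
      have := mul_le_mul_of_nonneg_left hxx' hL0
      linarith
    have hcr' : c * (8*(1+(L:ℝ))) * r = r := by rw [hcmul]; ring
    have e2 : c * r + 2 * ((L:ℝ) * (c * r)) ≤ r / 4 := by
      have hA : 0 ≤ c * r := mul_nonneg hc0.le hr.le
      have hB : r = 8*(c*r) + 8*((L:ℝ)*(c*r)) := by linear_combination -hcr'
      linarith [hA, mul_nonneg hL0 hA]
    have h3 : y = y' - s + t := hydef
    have h4 : s = r/2 := hs
    linarith [htle'.2, hgx', h2, e1, e2]
  have hpZ : p ∈ Z := by
    have hmem : p ∈ {p | ∃ (x : EuclideanSpace ℝ (Fin n)) (y : ℝ),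
        (inner ℝ x ν : ℝ) = 0 ∧ ‖x‖ < rt ∧ -h < y ∧ y < g x ∧ p = w + x + y • ν} :=
      ⟨x, y, hxν, hxn, hyh, hylt, hpeq⟩
    rw [← hZC] at hmem
    exact hmem.1
  refine ⟨hpZ, mem_ball.mpr ?_⟩
  have hztz : zt - z = (-s) • ν := by
    rw [hzt, hzeq, sub_smul, neg_smul]
    abel
  have hdzt : dist zt z = s := by
    rw [dist_eq_norm, hztz, norm_smul, hν, mul_one, Real.norm_eq_abs, abs_neg,
      abs_of_pos (by rw [hs]; linarith : (0:ℝ) < s)]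
  calc dist p z ≤ dist p zt + dist zt z := dist_triangle _ _ _
    _ ≤ c * r + s := by
        rw [hdzt]
        have : dist p zt ≤ c * r := hp
        linarith
    _ < r := by have : s = r/2 := hs; linarith [hcr]

/-- A bounded, open, nonempty Lipschitz set in `ℝⁿ` (`n ≥ 2`) satisfies the interior
corkscrew condition. -/
theorem lipschitz_set_interior_corkscrew {n : ℕ} (hn : 2 ≤ n)
    (Z : Set (EuclideanSpace ℝ (Fin n))) (hZbd : Bornology.IsBounded Z)
    (hZop : IsOpen Z) (hZne : Z.Nonempty) (hZlip : IsLipschitzSet Z) :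
    ∃ c > (0 : ℝ), ∀ z ∈ frontier Z, ∀ r : ℝ, 0 < r → r < Metric.diam Z →
      ∃ zt ∈ Z, Metric.closedBall zt (c * r) ⊆ Z ∩ Metric.ball z r := by
  by_cases hfr : (frontier Z).Nonempty
  case neg =>
    exact ⟨1, one_pos, fun z hz => absurd ⟨z, hz⟩ hfr⟩
  have H := fun w => local_cork Z hZlip w
  choose C hC R hR hloc using H
  have hK : IsCompact (frontier Z) :=
    Metric.isCompact_of_isClosed_isBounded isClosed_frontier
      (hZbd.closure.subset frontier_subset_closure)
  obtain ⟨t, htmem, htcov⟩ := hK.elim_nhds_subcover (fun w => ball w (R w))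
    (fun w _ => ball_mem_nhds w (hR w))
  obtain ⟨z₀, hz₀⟩ := hfr
  have ht : t.Nonempty := by
    obtain ⟨w, hw⟩ := mem_iUnion₂.mp (htcov hz₀)
    exact ⟨w, hw.1⟩
  set c0 : ℝ := t.inf' ht C with hc0def
  set R0 : ℝ := t.inf' ht R with hR0def
  have hc00 : 0 < c0 := (Finset.lt_inf'_iff ht).mpr (fun w _ => hC w)
  have hR00 : 0 < R0 := (Finset.lt_inf'_iff ht).mpr (fun w _ => hR w)
  set D : ℝ := max (Metric.diam Z) R0 with hDdef
  have hD0 : 0 < D := lt_of_lt_of_le hR00 (le_max_right _ _)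
  refine ⟨c0 * R0 / D, div_pos (mul_pos hc00 hR00) hD0, fun z hz r hr hrd => ?_⟩
  obtain ⟨w, hwm⟩ := mem_iUnion₂.mp (htcov hz)
  obtain ⟨hwt, hzb⟩ := hwm
  have hwfr : w ∈ frontier Z := htmem w hwt
  set r' : ℝ := min r R0 with hr'def
  have hr'0 : 0 < r' := lt_min hr hR00
  have hr'R : r' ≤ R w := le_trans (min_le_right _ _) (Finset.inf'_le _ hwt)
  obtain ⟨zt, hztZ, hsub⟩ := hloc w hwfr z hz (mem_ball.mp hzb) r' hr'0 hr'R
  have hle : c0 * R0 / D * r ≤ C w * r' := by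
    have h1 : c0 ≤ C w := Finset.inf'_le _ hwt
    have h2 : R0 * r ≤ D * r' := by
      rcases le_total r R0 with hcase | hcase
      · have : r' = r := min_eq_left hcase
        rw [this]
        exact mul_le_mul_of_nonneg_right (le_max_right _ _) hr.le
      · have : r' = R0 := min_eq_right hcase
        rw [this]
        calc R0 * r ≤ R0 * D := by
              exact mul_le_mul_of_nonneg_left (le_trans hrd.le (le_max_left _ _)) hR00.le
          _ = D * R0 := mul_comm _ _
    rw [div_mul_eq_mul_div, div_le_iff₀ hD0]
    calc c0 * R0 * r = c0 * (R0 * r) := by ring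
      _ ≤ c0 * (D * r') := mul_le_mul_of_nonneg_left h2 hc00.le
      _ ≤ C w * (D * r') := mul_le_mul_of_nonneg_right h1 (by positivity)
      _ = C w * r' * D := by ring
  exact ⟨zt, hztZ, (closedBall_subset_closedBall hle).trans (hsub.trans
    (inter_subset_inter_right _ (ball_subset_ball (min_le_left _ _))))⟩
end
end

section
/- Let n ≥ 2 and let Z ⊆ ℝⁿ be a bounded, open, nonempty set satisfying the following uniform interior cone condition: there exist constants H > 0 with H ≤ diam(Z) and L > 0 such that for every z ∈ ∂Z there is a unit vector ν_z ∈ ℝⁿ with K(z) := {z + w : 0 < ⟨w, −ν_z⟩ ≤ H and L·‖w − ⟨w,−ν_z⟩·(−ν_z)‖ ≤ ⟨w, −ν_z⟩} ⊆ Z. Set F := H / (4·√(1+L²)·diam(Z)). Then for every z ∈ ∂Z and every 0 < r < diam(Z), the point z̃ := z − (1/2)·min(H, r)·ν_z satisfies B̄(z̃, F·r) ⊆ Z ∩ B(z, r), where B̄ denotes a closed ball and B an open ball. In particular Z satisfies the interior corkscrew condition with constant F. -/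
open Metric Set

noncomputable section

set_option maxHeartbeats 1000000 in
/-- A bounded, open, nonempty set in `ℝⁿ` (`n ≥ 2`) satisfying a uniform interior cone
condition (cones of height `H` and aperture constant `L` at every boundary point) satisfies
the interior corkscrew condition with the explicit constant
`F = H / (4·√(1+L²)·diam Z)`, witnessed by `zt = z − (1/2)·min(H,r)·ν_z`. -/
theorem cone_condition_implies_corkscrew {n : ℕ} (hn : 2 ≤ n)
    (Z : Set (EuclideanSpace ℝ (Fin n))) (hZbd : Bornology.IsBounded Z)
    (hZop : IsOpen Z) (hZne : Z.Nonempty)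
    (H L : ℝ) (hH : 0 < H) (hHdiam : H ≤ Metric.diam Z) (hL : 0 < L)
    (ν : EuclideanSpace ℝ (Fin n) → EuclideanSpace ℝ (Fin n))
    (hν : ∀ z ∈ frontier Z, ‖ν z‖ = 1)
    (hcone : ∀ z ∈ frontier Z,
      {p | ∃ w : EuclideanSpace ℝ (Fin n), p = z + w ∧
          0 < (inner ℝ w (-(ν z)) : ℝ) ∧ (inner ℝ w (-(ν z)) : ℝ) ≤ H ∧
          L * ‖w - (inner ℝ w (-(ν z)) : ℝ) • (-(ν z))‖ ≤ (inner ℝ w (-(ν z)) : ℝ)} ⊆ Z) :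
    ∀ z ∈ frontier Z, ∀ r : ℝ, 0 < r → r < Metric.diam Z →
      Metric.closedBall (z - ((1 / 2) * min H r) • ν z)
          (H / (4 * Real.sqrt (1 + L ^ 2) * Metric.diam Z) * r)
        ⊆ Z ∩ Metric.ball z r := by
  intro z hz r hr0 hrd
  have hD0 : 0 < Metric.diam Z := hr0.trans hrd
  set D := Metric.diam Z with hDdef
  set S := Real.sqrt (1 + L ^ 2) with hSdef
  have hS0 : 0 < S := Real.sqrt_pos.mpr (by positivity)
  have hS2 : S ^ 2 = 1 + L ^ 2 := Real.sq_sqrt (by positivity)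
  have hS1 : 1 ≤ S := by nlinarith
  have hL2S : L + 1 ≤ 2 * S := by nlinarith [sq_nonneg (L - 1)]
  set ε := H / (4 * S * D) * r with hεdef
  have hε0 : 0 < ε := by positivity
  set s := (1 / 2 : ℝ) * min H r with hsdef
  have hmin0 : 0 < min H r := lt_min hH hr0
  have hs0 : 0 < s := by positivity
  have hεSeq : ε * S = H * r / (4 * D) := by
    rw [hεdef]; field_simp
  have hεS : ε * S ≤ min H r / 4 := by
    rw [hεSeq, div_le_div_iff₀ (by positivity) (by norm_num)]
    rcases min_cases H r with ⟨hm, hle⟩ | ⟨hm, hle⟩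
    · rw [hm]; nlinarith [hrd.le]
    · rw [hm]; nlinarith
  have hε_s : ε ≤ s / 2 := by nlinarith
  have hLε : (L + 1) * ε ≤ s := by nlinarith
  intro p hp
  rw [mem_closedBall, dist_eq_norm] at hp
  set t := -(ν z) with htdef
  have ht : ‖t‖ = 1 := by rw [htdef, norm_neg]; exact hν z hz
  set u := p - (z - s • ν z) with hudef
  have hun : ‖u‖ ≤ ε := hp
  set w := p - z with hwdef
  have hwu : w = u + s • t := by
    rw [hwdef, hudef, htdef]; module
  set c : ℝ := inner ℝ u t with hcdef
  have hc : |c| ≤ ε := by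
    have h1 := abs_real_inner_le_norm u t
    rw [ht, mul_one] at h1
    exact h1.trans hun
  have htt : (inner ℝ t t : ℝ) = 1 := by
    rw [real_inner_self_eq_norm_sq, ht]; norm_num
  have ha : (inner ℝ w t : ℝ) = s + c := by
    rw [hwu, inner_add_left, real_inner_smul_left, htt, hcdef]; ring
  have horth : w - (inner ℝ w t : ℝ) • t = u - c • t := by
    rw [ha, hwu]; module
  have hproj : ‖u - c • t‖ ≤ ‖u‖ := by
    have h := @norm_sub_sq_real (EuclideanSpace ℝ (Fin n)) _ _ u (c • t)
    have h2 : (inner ℝ u (c • t) : ℝ) = c * c := by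
      rw [real_inner_smul_right, hcdef]
    have h3 : ‖c • t‖ = |c| := by rw [norm_smul, ht, mul_one, Real.norm_eq_abs]
    have h4 : ‖u - c • t‖ ^ 2 ≤ ‖u‖ ^ 2 := by
      rw [h, h2, h3]
      nlinarith [sq_abs c]
    exact le_of_pow_le_pow_left₀ two_ne_zero (norm_nonneg u) h4
  have habs := abs_le.mp hc
  constructor
  · apply hcone z hz
    simp only [Set.mem_setOf_eq]
    refine ⟨w, by rw [hwdef]; abel, ?_, ?_, ?_⟩
    · rw [← htdef, ha]; linarith
    · rw [← htdef, ha]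
      have : min H r ≤ H := min_le_left _ _
      linarith
    · rw [← htdef, horth, ha]
      have h5 : L * ‖u - c • t‖ ≤ L * ε := by
        have := hproj.trans hun
        nlinarith
      nlinarith
  · rw [mem_ball, dist_eq_norm, ← hwdef, hwu]
    have h6 : ‖u + s • t‖ ≤ ‖u‖ + s := by
      calc ‖u + s • t‖ ≤ ‖u‖ + ‖s • t‖ := norm_add_le _ _
        _ = ‖u‖ + s := by rw [norm_smul, ht, mul_one, Real.norm_eq_abs, abs_of_pos hs0]
    have : min H r ≤ r := min_le_right _ _
    calc ‖u + s • t‖ ≤ ‖u‖ + s := h6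
      _ < r := by linarith
end
end

section
/- Let (X, d) be a metric space, E ⊆ X a nonempty subset, p ∈ X, and let 0 < α < α̃. Set δ := (α̃ − α)/((1+α)(2+α̃)). Suppose x ∈ X satisfies d(p, x) ≤ (1+α)·dist(x, E). Then every point x̃ ∈ X with d(x̃, x) ≤ δ·d(p, x) satisfies d(p, x̃) ≤ (1+α̃)·dist(x̃, E). -/
open Metric

/-- A metric ball of radius `δ·d(p,x)`, with `δ = (α̃−α)/((1+α)(2+α̃))`, around any point `x`
of the nontangential cone with vertex `p` and aperture `α` relative to the set `E` is
contained in the enlarged cone with aperture `α̃`. -/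
theorem cone_ball_in_enlarged_cone {X : Type*} [MetricSpace X]
    (E : Set X) (hE : E.Nonempty) (p : X) (α αt : ℝ) (hα : 0 < α) (hαt : α < αt)
    (x : X) (hx : dist p x ≤ (1 + α) * Metric.infDist x E)
    (xt : X) (hxt : dist xt x ≤ ((αt - α) / ((1 + α) * (2 + αt))) * dist p x) :
    dist p xt ≤ (1 + αt) * Metric.infDist xt E := by
  set δ := (αt - α) / ((1 + α) * (2 + αt)) with hδ
  have h1 : 0 < 1 + α := by linarith
  have h2 : 0 < 2 + αt := by linarith
  have hinf : Metric.infDist x E ≤ Metric.infDist xt E + dist x xt :=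
    Metric.infDist_le_infDist_add_dist
  have hd : dist p xt ≤ dist p x + dist x xt := dist_triangle p x xt
  have hδ' : δ * ((1 + α) * (2 + αt)) = αt - α := by
    rw [hδ]; field_simp
  have hdx : 0 ≤ dist p x := dist_nonneg
  rw [dist_comm x xt] at hinf hd
  have hxE : dist p x / (1 + α) ≤ Metric.infDist x E := by
    rw [div_le_iff₀ h1]; linarith
  have hid : (1 + αt) * (dist p x / (1 + α) - δ * dist p x) = (1 + δ) * dist p x := by
    rw [hδ]; field_simp; ring
  have hlow : dist p x / (1 + α) - δ * dist p x ≤ Metric.infDist xt E := by linarith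
  have h3 : 0 < 1 + αt := by linarith
  calc dist p xt ≤ dist p x + dist xt x := hd
    _ ≤ (1 + δ) * dist p x := by linarith
    _ = (1 + αt) * (dist p x / (1 + α) - δ * dist p x) := hid.symm
    _ ≤ (1 + αt) * Metric.infDist xt E := by
        exact mul_le_mul_of_nonneg_left hlow h3.le
end

section
/- Let n ≥ 2 and let Ω ⊆ ℝⁿ be a bounded, open, nonempty set with Ω ≠ ℝⁿ, and let E := ∂Ω be its frontier. Let σ be a Borel measure on ℝⁿ and C₀ > 0 a constant such that σ(E ∩ B̄(y, t)) ≤ C₀·t^{n−1} for every y ∈ E and every t > 0. Fix α̃ > 0, p ∈ E and r > 0, and for q ∈ E set Γ̃^r(q) := {x ∈ Ω : ‖x − q‖ ≤ (1 + α̃)·dist(x, E)} ∩ B(q, r). Then for every Borel measurable f : ℝⁿ → [0, ∞], ∫_{E ∩ B(p,r)} ( ∫_{Γ̃^r(q)} f(x)·‖x − q‖^{1−n} dx ) dσ(q) ≤ C₀·(2 + α̃)^{n−1} · ∫_{Ω ∩ B(p, 2r)} f(x) dx, where dx denotes Lebesgue measure on ℝⁿ. -/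
open Metric Set MeasureTheory ENNReal

lemma measurable_rpow_const_aux {α : Type*} [MeasurableSpace α] {g : α → ℝ}
    (hg : Measurable g) (h0 : ∀ a, 0 ≤ g a) (c : ℝ) (hc : c ≠ 0) :
    Measurable fun a => g a ^ c := by
  have heq : (fun a => g a ^ c) =
      fun a => if g a = 0 then 0 else Real.exp (Real.log (g a) * c) := by
    funext a
    by_cases h : g a = 0
    · simp [h, Real.zero_rpow hc]
    · rw [if_neg h, Real.rpow_def_of_pos (lt_of_le_of_ne (h0 a) (Ne.symm h))]
  rw [heq]
  exact Measurable.ite (hg (measurableSet_singleton 0)) measurable_const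
    (Real.measurable_exp.comp ((Real.measurable_log.comp hg).mul_const c))

/-- The core Fubini/shadow estimate for the Quantitative Fatou Property: integrating
`f(x)·‖x−q‖^{1−n}` over truncated nontangential cones `Γ̃^r(q)` against an upper
`(n−1)`-Ahlfors–David regular boundary measure `σ` over `∂Ω ∩ B(p,r)` is controlled by
the Lebesgue integral of `f` over `Ω ∩ B(p,2r)`. -/
theorem fubini_shadow_estimate {n : ℕ} (hn : 2 ≤ n)
    (Ω : Set (EuclideanSpace ℝ (Fin n))) (hbd : Bornology.IsBounded Ω)
    (hop : IsOpen Ω) (hne : Ω.Nonempty) (hproper : Ω ≠ Set.univ)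
    (σ : Measure (EuclideanSpace ℝ (Fin n))) (C₀ : ℝ) (hC₀ : 0 < C₀)
    (hσ : ∀ y ∈ frontier Ω, ∀ t : ℝ, 0 < t →
      σ (frontier Ω ∩ Metric.closedBall y t) ≤ ENNReal.ofReal (C₀ * t ^ (n - 1)))
    (αt : ℝ) (hαt : 0 < αt)
    (p : EuclideanSpace ℝ (Fin n)) (hp : p ∈ frontier Ω) (r : ℝ) (hr : 0 < r)
    (f : EuclideanSpace ℝ (Fin n) → ℝ≥0∞) (hf : Measurable f) :
    (∫⁻ q in frontier Ω ∩ Metric.ball p r,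
        (∫⁻ x in ({x ∈ Ω | ‖x - q‖ ≤ (1 + αt) * Metric.infDist x (frontier Ω)} ∩
            Metric.ball q r),
          f x * ENNReal.ofReal (‖x - q‖ ^ ((1 : ℝ) - n))) ∂σ)
      ≤ ENNReal.ofReal (C₀ * (2 + αt) ^ (n - 1)) *
          ∫⁻ x in Ω ∩ Metric.ball p (2 * r), f x := by
  classical
  have hexp_ne : (1 : ℝ) - n ≠ 0 := by
    have : (2:ℝ) ≤ n := by exact_mod_cast hn
    linarith
  have hexp_nonpos : (1 : ℝ) - n ≤ 0 := by
    have : (2:ℝ) ≤ n := by exact_mod_cast hn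
    linarith
  set E := frontier Ω with hEdef
  have hEclosed : IsClosed E := isClosed_frontier
  have hEne : E.Nonempty := ⟨p, hp⟩
  have hEbd : Bornology.IsBounded E := hbd.closure.subset frontier_subset_closure
  have hEcompact : IsCompact E := isCompact_of_isClosed_isBounded hEclosed hEbd
  set S : Set (EuclideanSpace ℝ (Fin n)) := E ∩ Metric.ball p r with hSdef
  have hSmeas : MeasurableSet S := hEclosed.measurableSet.inter measurableSet_ball
  haveI : IsFiniteMeasure (σ.restrict S) := by
    constructor
    rw [Measure.restrict_apply MeasurableSet.univ, univ_inter]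
    calc σ S ≤ σ (E ∩ Metric.closedBall p r) :=
          measure_mono (inter_subset_inter_right _ ball_subset_closedBall)
      _ ≤ ENNReal.ofReal (C₀ * r ^ (n - 1)) := hσ p hp r hr
      _ < ⊤ := ofReal_lt_top
  set w : EuclideanSpace ℝ (Fin n) → EuclideanSpace ℝ (Fin n) → ℝ≥0∞ :=
    fun q x => f x * ENNReal.ofReal (‖x - q‖ ^ ((1 : ℝ) - n)) with hwdef
  set A : Set (EuclideanSpace ℝ (Fin n) × EuclideanSpace ℝ (Fin n)) :=
    {z | z.2 ∈ Ω ∧ ‖z.2 - z.1‖ ≤ (1 + αt) * Metric.infDist z.2 E ∧ dist z.2 z.1 < r}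
    with hAdef
  have hAmeas : MeasurableSet A := by
    have h1 : MeasurableSet {z : EuclideanSpace ℝ (Fin n) × EuclideanSpace ℝ (Fin n) |
        z.2 ∈ Ω} := measurable_snd hop.measurableSet
    have h2 : MeasurableSet {z : EuclideanSpace ℝ (Fin n) × EuclideanSpace ℝ (Fin n) |
        ‖z.2 - z.1‖ ≤ (1 + αt) * Metric.infDist z.2 E} :=
      measurableSet_le (continuous_snd.sub continuous_fst).norm.measurable
        (continuous_const.mul ((continuous_infDist_pt E).comp continuous_snd)).measurable
    have h3 : MeasurableSet {z : EuclideanSpace ℝ (Fin n) × EuclideanSpace ℝ (Fin n) |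
        dist z.2 z.1 < r} :=
      measurableSet_lt (continuous_dist.comp (continuous_snd.prodMk continuous_fst)).measurable
        measurable_const
    exact h1.inter (h2.inter h3)
  set G : EuclideanSpace ℝ (Fin n) × EuclideanSpace ℝ (Fin n) → ℝ≥0∞ :=
    A.indicator (fun z => w z.1 z.2) with hGdef
  have hGmeas : Measurable G := by
    apply Measurable.indicator _ hAmeas
    apply Measurable.mul (hf.comp measurable_snd)
    apply Measurable.ennreal_ofReal
    exact measurable_rpow_const_aux (continuous_snd.sub continuous_fst).norm.measurable
      (fun z => norm_nonneg _) _ hexp_ne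
  -- Step 1: express the inner integral via G
  have step1 : ∀ q, (∫⁻ x in ({x ∈ Ω | ‖x - q‖ ≤ (1 + αt) * Metric.infDist x E} ∩
      Metric.ball q r), w q x) = ∫⁻ x, G (q, x) := by
    intro q
    have hTmeas : MeasurableSet ({x ∈ Ω | ‖x - q‖ ≤ (1 + αt) * Metric.infDist x E} ∩
        Metric.ball q r) := by
      refine (MeasurableSet.inter ?_ measurableSet_ball)
      refine hop.measurableSet.inter ?_
      exact measurableSet_le (continuous_id.sub continuous_const).norm.measurable
        (continuous_const.mul (continuous_infDist_pt E)).measurable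
    rw [← lintegral_indicator hTmeas]
    refine lintegral_congr fun x => ?_
    by_cases hx : x ∈ ({x ∈ Ω | ‖x - q‖ ≤ (1 + αt) * Metric.infDist x E} ∩ Metric.ball q r)
    · have hxA : (q, x) ∈ A := ⟨hx.1.1, hx.1.2, hx.2⟩
      rw [indicator_of_mem hx, hGdef, indicator_of_mem hxA]
    · have hxA : (q, x) ∉ A := by
        intro h
        exact hx ⟨⟨h.1, h.2.1⟩, h.2.2⟩
      rw [indicator_of_notMem hx, hGdef, indicator_of_notMem hxA]
  -- Step 2: swap integrals
  have step2 : (∫⁻ q in S, ∫⁻ x, G (q, x) ∂(volume) ∂σ)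
      = ∫⁻ x, ∫⁻ q in S, G (q, x) ∂σ ∂(volume) := by
    exact lintegral_lintegral_swap (hGmeas.aemeasurable)
  -- constant
  set C : ℝ≥0∞ := ENNReal.ofReal (C₀ * (2 + αt) ^ (n - 1)) with hCdef
  -- Step 3: pointwise bound
  have step3 : ∀ x, (∫⁻ q in S, G (q, x) ∂σ)
      ≤ (Ω ∩ Metric.ball p (2 * r)).indicator (fun x => C * f x) x := by
    intro x
    by_cases hx : x ∈ Ω ∩ Metric.ball p (2 * r)
    · obtain ⟨hxΩ, hxball⟩ := hx
      set d : ℝ := Metric.infDist x E with hddef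
      have hxE : x ∉ E := by
        rw [hEdef, hop.frontier_eq]
        intro h
        exact h.2 hxΩ
      have hd : 0 < d := (hEclosed.notMem_iff_infDist_pos hEne).mp hxE
      obtain ⟨y, hyE, hyd⟩ := hEcompact.exists_infDist_eq_dist hEne x
      set K : Set (EuclideanSpace ℝ (Fin n)) := E ∩ Metric.closedBall y ((2 + αt) * d)
        with hKdef
      have hKmeas : MeasurableSet K := hEclosed.measurableSet.inter measurableSet_closedBall
      have hptwise : ∀ q ∈ S, G (q, x)
          ≤ K.indicator (fun _ => f x * ENNReal.ofReal (d ^ ((1 : ℝ) - n))) q := by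
        intro q hq
        by_cases hA : (q, x) ∈ A
        · have h1 : ‖x - q‖ ≤ (1 + αt) * d := hA.2.1
          have hdq : d ≤ ‖x - q‖ := by
            rw [← dist_eq_norm]
            exact Metric.infDist_le_dist_of_mem hq.1
          have hqK : q ∈ K := by
            refine ⟨hq.1, ?_⟩
            rw [Metric.mem_closedBall]
            have h2 : dist q y ≤ dist q x + dist x y := dist_triangle q x y
            have h3 : dist q x = ‖x - q‖ := by rw [dist_comm, dist_eq_norm]
            have h4 : dist x y = d := hyd.symm
            nlinarith [h2, h3 ▸ h1]
          rw [hGdef, indicator_of_mem hA, indicator_of_mem hqK]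
          refine mul_le_mul_right (ofReal_le_ofReal ?_) _
          exact Real.rpow_le_rpow_of_nonpos hd hdq hexp_nonpos
        · rw [hGdef, indicator_of_notMem hA]
          exact zero_le
      calc (∫⁻ q in S, G (q, x) ∂σ)
          ≤ ∫⁻ q in S, K.indicator (fun _ => f x * ENNReal.ofReal (d ^ ((1 : ℝ) - n))) q ∂σ :=
            setLIntegral_mono' hSmeas hptwise
        _ ≤ ∫⁻ q, K.indicator (fun _ => f x * ENNReal.ofReal (d ^ ((1 : ℝ) - n))) q ∂σ :=
            setLIntegral_le_lintegral _ _
        _ = f x * ENNReal.ofReal (d ^ ((1 : ℝ) - n)) * σ K := lintegral_indicator_const hKmeas _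
        _ ≤ f x * ENNReal.ofReal (d ^ ((1 : ℝ) - n)) *
              ENNReal.ofReal (C₀ * ((2 + αt) * d) ^ (n - 1)) := by
            refine mul_le_mul_right ?_ _
            exact hσ y hyE _ (by positivity)
        _ = C * f x := by
            rw [mul_assoc, ← ENNReal.ofReal_mul (Real.rpow_nonneg hd.le _)]
            rw [mul_comm]
            congr 1
            rw [hCdef]
            congr 1
            have hnat : (d : ℝ) ^ (n - 1 : ℕ) = d ^ ((n : ℝ) - 1) := by
              rw [← Real.rpow_natCast d (n - 1), Nat.cast_sub (by omega), Nat.cast_one]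
            have hdd : d ^ ((1 : ℝ) - n) * d ^ ((n : ℝ) - 1) = 1 := by
              rw [← Real.rpow_add hd]
              norm_num
            rw [mul_pow, hnat]
            linear_combination C₀ * (2 + αt) ^ (n - 1) * hdd
      exact le_of_eq (Set.indicator_of_mem (s := Ω ∩ Metric.ball p (2 * r)) (a := x)
          ⟨hxΩ, hxball⟩ (fun x => C * f x)).symm
    · rw [indicator_of_notMem hx]
      refine le_of_eq ?_
      have hzero : ∀ q ∈ S, G (q, x) = 0 := by
        intro q hq
        rw [hGdef]
        apply indicator_of_notMem
        intro hA
        apply hx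
        refine ⟨hA.1, ?_⟩
        rw [Metric.mem_ball]
        calc dist x p ≤ dist x q + dist q p := dist_triangle x q p
          _ < r + r := add_lt_add hA.2.2 (by
              have := hq.2
              rwa [Metric.mem_ball] at this)
          _ = 2 * r := by ring
      calc (∫⁻ q in S, G (q, x) ∂σ) = ∫⁻ q in S, 0 ∂σ :=
            setLIntegral_congr_fun hSmeas hzero
        _ = 0 := lintegral_zero
  -- Assemble
  calc (∫⁻ q in S, (∫⁻ x in ({x ∈ Ω | ‖x - q‖ ≤ (1 + αt) * Metric.infDist x E} ∩
          Metric.ball q r), w q x) ∂σ)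
      = ∫⁻ q in S, ∫⁻ x, G (q, x) ∂(volume) ∂σ := by
        refine lintegral_congr fun q => ?_
        exact step1 q
    _ = ∫⁻ x, ∫⁻ q in S, G (q, x) ∂σ ∂(volume) := step2
    _ ≤ ∫⁻ x, (Ω ∩ Metric.ball p (2 * r)).indicator (fun x => C * f x) x ∂(volume) :=
        lintegral_mono step3
    _ = ∫⁻ x in Ω ∩ Metric.ball p (2 * r), C * f x := by
        rw [lintegral_indicator (hop.measurableSet.inter measurableSet_ball)]
    _ = C * ∫⁻ x in Ω ∩ Metric.ball p (2 * r), f x := by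
        rw [lintegral_const_mul _ hf]
end

section
/- Let n ≥ 1 and for each r ∈ ℝ let R(r) : ℝⁿ → ℝⁿ be a linear isometric equivalence (a rotation) of Euclidean space ℝⁿ. Define F : ℝⁿ → ℝⁿ by F(x) = R(‖x‖)(x), and assume F is Borel measurable. Then F preserves Lebesgue measure: the pushforward of the Lebesgue measure under F equals the Lebesgue measure; in particular, for every Borel set U ⊆ ℝⁿ one has vol(F⁻¹(U)) = vol(U). -/
open MeasureTheory Set Metric
open scoped Pointwise

section Aux

variable {n : ℕ}

local notation "E" => EuclideanSpace ℝ (Fin n)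

/-- The restriction of a linear isometric equivalence to the unit sphere. -/
noncomputable def rotSphere (e : E ≃ₗᵢ[ℝ] E) : sphere (0 : E) 1 → sphere (0 : E) 1 :=
  fun v => ⟨e v, by
    rw [mem_sphere_zero_iff_norm, e.norm_map]
    exact mem_sphere_zero_iff_norm.1 v.2⟩

lemma continuous_rotSphere (e : E ≃ₗᵢ[ℝ] E) : Continuous (rotSphere e) :=
  Continuous.subtype_mk (e.continuous.comp continuous_subtype_val) _

lemma image_smul_Ioo (e : E ≃ₗᵢ[ℝ] E) (A : Set E) :
    e '' (Ioo (0 : ℝ) 1 • A) = Ioo (0 : ℝ) 1 • (e '' A) := by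
  rw [← Set.iUnion_smul_set, ← Set.iUnion_smul_set, Set.image_iUnion₂]
  exact Set.iUnion₂_congr fun c _ => Set.image_smul_comm e c A (fun x => e.map_smul c x)

lemma map_toSphere_rotSphere (e : E ≃ₗᵢ[ℝ] E) :
    Measure.map (rotSphere e) (volume : Measure E).toSphere =
      (volume : Measure E).toSphere := by
  have hm : Measurable (rotSphere e) := (continuous_rotSphere e).measurable
  refine Measure.ext fun s hs => ?_
  rw [Measure.map_apply hm hs, Measure.toSphere_apply' _ hs,
    Measure.toSphere_apply' _ (hm hs)]
  congr 1
  have himg : (Subtype.val '' (rotSphere e ⁻¹' s)) = e.symm '' (Subtype.val '' s) := by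
    ext x
    constructor
    · rintro ⟨v, hv, rfl⟩
      exact ⟨e v.1, ⟨rotSphere e v, hv, rfl⟩, by simp⟩
    · rintro ⟨y, ⟨w, hw, rfl⟩, rfl⟩
      have hw' : e.symm w.1 ∈ sphere (0 : E) 1 := by
        rw [mem_sphere_zero_iff_norm, e.symm.norm_map]
        exact mem_sphere_zero_iff_norm.1 w.2
      refine ⟨⟨e.symm w.1, hw'⟩, ?_, rfl⟩
      have hww : rotSphere e ⟨e.symm w.1, hw'⟩ = w := Subtype.ext (by simp [rotSphere])
      rw [Set.mem_preimage, hww]; exact hw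
  rw [himg, ← image_smul_Ioo e.symm,
    Set.image_eq_preimage_of_inverse e.apply_symm_apply e.symm_apply_apply]
  exact e.measurePreserving.measure_preimage_emb e.toMeasurableEquiv.measurableEmbedding _

end Aux

/-- The sphere-by-sphere rotation map `F(x) = R(‖x‖)(x)`, where each `R(r)` is a linear
isometric equivalence of `ℝⁿ`, preserves Lebesgue measure: the pushforward of the volume
under `F` is the volume, and `vol(F⁻¹(U)) = vol(U)` for every Borel set `U`. -/
theorem rotation_by_norm_measure_preserving {n : ℕ} (hn : 1 ≤ n)
    (R : ℝ → (EuclideanSpace ℝ (Fin n) ≃ₗᵢ[ℝ] EuclideanSpace ℝ (Fin n)))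
    (F : EuclideanSpace ℝ (Fin n) → EuclideanSpace ℝ (Fin n))
    (hF : ∀ x, F x = R ‖x‖ x) (hFm : Measurable F) :
    Measure.map F (volume : Measure (EuclideanSpace ℝ (Fin n))) = volume ∧
      ∀ U : Set (EuclideanSpace ℝ (Fin n)), MeasurableSet U →
        volume (F ⁻¹' U) = volume U := by
  haveI : Nonempty (Fin n) := ⟨⟨0, hn⟩⟩
  -- norms are preserved by `F`
  have hnorm : ∀ x : (EuclideanSpace ℝ (Fin n)), ‖F x‖ = ‖x‖ := by
    intro x; rw [hF x, (R ‖x‖).norm_map]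
  -- `F` maps nonzero vectors to nonzero vectors
  have hne : ∀ x : ({0}ᶜ : Set (EuclideanSpace ℝ (Fin n))), F x.1 ∈ ({0}ᶜ : Set (EuclideanSpace ℝ (Fin n))) := by
    intro x
    simp only [Set.mem_compl_iff, Set.mem_singleton_iff, ← norm_eq_zero (a := F x.1)] at *
    rw [hnorm]
    exact fun h => x.2 (norm_eq_zero.mp h)
  -- the restriction of `F` to nonzero vectors
  set F' : ({0}ᶜ : Set (EuclideanSpace ℝ (Fin n))) → ({0}ᶜ : Set (EuclideanSpace ℝ (Fin n))) := fun x => ⟨F x.1, hne x⟩ with hF'def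
  set h := homeomorphUnitSphereProd (EuclideanSpace ℝ (Fin n)) with hhdef
  -- the conjugated map on `sphere × (0, ∞)`
  set G : sphere (0 : (EuclideanSpace ℝ (Fin n))) 1 × Set.Ioi (0 : ℝ) → sphere (0 : (EuclideanSpace ℝ (Fin n))) 1 × Set.Ioi (0 : ℝ) :=
    fun p => (rotSphere (R p.2.1) p.1, p.2) with hGdef
  have key : ∀ x : ({0}ᶜ : Set (EuclideanSpace ℝ (Fin n))), h (F' x) = G (h x) := by
    intro x
    have hx : ‖x.1‖ ≠ 0 := fun h0 => x.2 (norm_eq_zero.mp h0)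
    refine Prod.ext (Subtype.ext ?_) (Subtype.ext ?_)
    · show (1 : ℝ) • ‖F x.1‖⁻¹ • F x.1 = (R ((h x).2.1)) ((h x).1.1)
      simp only [hhdef, homeomorphUnitSphereProd_apply_snd_coe,
        homeomorphUnitSphereProd_apply_fst_coe, one_smul, div_one]
      rw [hnorm, hF x, (R ‖x.1‖).map_smul]
    · show ‖F x.1‖ / 1 = ‖x.1‖ / 1
      rw [div_one, div_one]
      exact hnorm x.1
  have hF'eq : F' = h.symm ∘ G ∘ h := by
    funext x
    have := key x
    simp only [Function.comp_apply, ← this, Homeomorph.symm_apply_apply]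
  -- measurability
  have hF'm : Measurable F' := by
    apply Measurable.subtype_mk
    exact hFm.comp measurable_subtype_coe
  have hGm : Measurable G := by
    have : G = h ∘ F' ∘ h.symm := by
      funext p
      simp only [Function.comp_apply]
      rw [key (h.symm p), Homeomorph.apply_symm_apply]
    rw [this]
    exact h.measurable.comp (hF'm.comp h.symm.measurable)
  -- the product measure
  set ν : Measure (sphere (0 : (EuclideanSpace ℝ (Fin n))) 1 × Set.Ioi (0 : ℝ)) :=
    (volume : Measure (EuclideanSpace ℝ (Fin n))).toSphere.prod (Measure.volumeIoiPow (Module.finrank ℝ (EuclideanSpace ℝ (Fin n)) - 1)) with hνdef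
  -- `G` preserves `ν`
  have hGmap : Measure.map G ν = ν := by
    refine Measure.ext fun s hs => ?_
    rw [Measure.map_apply hGm hs, hνdef, Measure.prod_apply_symm (hGm hs),
      Measure.prod_apply_symm hs]
    refine lintegral_congr fun r => ?_
    have hsec : (fun v => (v, r)) ⁻¹' (G ⁻¹' s) =
        rotSphere (R r.1) ⁻¹' ((fun v => (v, r)) ⁻¹' s) := rfl
    rw [hsec, ← Measure.map_apply ((continuous_rotSphere (R r.1)).measurable)
      (hs.preimage measurable_prodMk_right), map_toSphere_rotSphere (R r.1)]
  have hGp : MeasurePreserving G ν ν := ⟨hGm, hGmap⟩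
  have hhp : MeasurePreserving h ((volume : Measure (EuclideanSpace ℝ (Fin n))).comap Subtype.val) ν :=
    Measure.measurePreserving_homeomorphUnitSphereProd (volume : Measure (EuclideanSpace ℝ (Fin n)))
  have hhps : MeasurePreserving h.symm ν ((volume : Measure (EuclideanSpace ℝ (Fin n))).comap Subtype.val) :=
    MeasurePreserving.symm h.toMeasurableEquiv hhp
  have hF'p : MeasurePreserving F' ((volume : Measure (EuclideanSpace ℝ (Fin n))).comap Subtype.val) ((volume : Measure (EuclideanSpace ℝ (Fin n))).comap Subtype.val) := by
    rw [hF'eq]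
    exact hhps.comp (hGp.comp hhp)
  -- transfer back to `(EuclideanSpace ℝ (Fin n))`
  have hc : MeasurableSet ({0}ᶜ : Set (EuclideanSpace ℝ (Fin n))) := (measurableSet_singleton 0).compl
  have hemb : MeasurableEmbedding (Subtype.val : ({0}ᶜ : Set (EuclideanSpace ℝ (Fin n))) → (EuclideanSpace ℝ (Fin n))) :=
    MeasurableEmbedding.subtype_coe hc
  have main : ∀ U : Set (EuclideanSpace ℝ (Fin n)), MeasurableSet U → (volume : Measure (EuclideanSpace ℝ (Fin n))) (F ⁻¹' U) = (volume : Measure (EuclideanSpace ℝ (Fin n))) U := by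
    intro U hU
    have h1 : (volume : Measure (EuclideanSpace ℝ (Fin n))) (F ⁻¹' U \ {0}) = (volume : Measure (EuclideanSpace ℝ (Fin n))) (F ⁻¹' U) := measure_diff_null (measure_singleton 0)
    have h2 : (volume : Measure (EuclideanSpace ℝ (Fin n))) (U \ {0}) = (volume : Measure (EuclideanSpace ℝ (Fin n))) U := measure_diff_null (measure_singleton 0)
    have himg : F ⁻¹' U \ {0} = Subtype.val '' (F' ⁻¹' (Subtype.val ⁻¹' U)) := by
      ext x
      constructor
      · rintro ⟨hFU, hx0⟩
        exact ⟨⟨x, hx0⟩, hFU, rfl⟩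
      · rintro ⟨⟨y, hy⟩, hFy, rfl⟩
        exact ⟨hFy, hy⟩
    calc (volume : Measure (EuclideanSpace ℝ (Fin n))) (F ⁻¹' U) = (volume : Measure (EuclideanSpace ℝ (Fin n))) (Subtype.val '' (F' ⁻¹' (Subtype.val ⁻¹' U))) := by
          rw [← h1, himg]
      _ = ((volume : Measure (EuclideanSpace ℝ (Fin n))).comap Subtype.val) (F' ⁻¹' (Subtype.val ⁻¹' U)) :=
          (hemb.comap_apply _ _).symm
      _ = ((volume : Measure (EuclideanSpace ℝ (Fin n))).comap Subtype.val) (Subtype.val ⁻¹' U) :=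
          hF'p.measure_preimage (hU.preimage measurable_subtype_coe).nullMeasurableSet
      _ = (volume : Measure (EuclideanSpace ℝ (Fin n))) (Subtype.val '' (Subtype.val ⁻¹' U)) := hemb.comap_apply _ _
      _ = (volume : Measure (EuclideanSpace ℝ (Fin n))) (U \ {0}) := by rw [Subtype.image_preimage_coe, Set.diff_eq, Set.inter_comm]
      _ = (volume : Measure (EuclideanSpace ℝ (Fin n))) U := h2
  refine ⟨Measure.ext fun U hU => ?_, main⟩
  rw [Measure.map_apply hFm hU]
  exact main U hU
end

section
/- Let n ≥ 2, let φ : ℝⁿ → ℝ be continuously differentiable, and let 0 < r₂ < r₁. Let μ denote the surface measure on the unit sphere S^{n−1} ⊆ ℝⁿ, normalized so that Lebesgue measure on ℝⁿ has the polar decomposition ∫_{ℝⁿ} h(x) dx = ∫_0^∞ ∫_{S^{n−1}} h(r·ω) r^{n−1} dμ(ω) dr. Then for every μ-measurable set A ⊆ S^{n−1}, ∫_A |φ(r₁·ω) − φ(r₂·ω)| dμ(ω) ≤ ∫_{U} ‖∇φ(x)‖·‖x‖^{1−n} dx, where U := {r·ω : ω ∈ A, r₂ ≤ r ≤ r₁}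 is the spherical sector over A between the radii r₂ and r₁ and ∇φ denotes the gradient (Fréchet derivative) of φ. -/
open Metric Set MeasureTheory ENNReal

lemma ftc_aux {n : ℕ} (φ : EuclideanSpace ℝ (Fin n) → ℝ) (hφ : ContDiff ℝ 1 φ)
    {r₁ r₂ : ℝ} (hr : r₂ ≤ r₁) (ω : EuclideanSpace ℝ (Fin n)) (hω : ‖ω‖ = 1) :
    ENNReal.ofReal |φ (r₁ • ω) - φ (r₂ • ω)| ≤
      ∫⁻ r in Set.Ioc r₂ r₁, ENNReal.ofReal ‖fderiv ℝ φ (r • ω)‖ := by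
  have hd : ∀ t : ℝ, HasDerivAt (fun r : ℝ => φ (r • ω)) ((fderiv ℝ φ (t • ω)) ω) t := by
    intro t
    have h1 : HasFDerivAt φ (fderiv ℝ φ (t • ω)) (t • ω) :=
      (hφ.differentiable one_ne_zero (t • ω)).hasFDerivAt
    have h2 : HasDerivAt (fun r : ℝ => r • ω) ω t := by
      simpa using (hasDerivAt_id t).smul_const ω
    exact h1.comp_hasDerivAt t h2
  have hcont : Continuous fun t : ℝ => fderiv ℝ φ (t • ω) :=
    (hφ.continuous_fderiv one_ne_zero).comp (continuous_id.smul continuous_const)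
  have hcont' : Continuous fun t : ℝ => (fderiv ℝ φ (t • ω)) ω :=
    hcont.clm_apply continuous_const
  have hg : Continuous fun t : ℝ => ‖fderiv ℝ φ (t • ω)‖ := hcont.norm
  have heq : φ (r₁ • ω) - φ (r₂ • ω) = ∫ t in r₂..r₁, (fderiv ℝ φ (t • ω)) ω :=
    (intervalIntegral.integral_eq_sub_of_hasDerivAt (fun t _ => hd t)
      (hcont'.intervalIntegrable _ _)).symm
  have hb : |φ (r₁ • ω) - φ (r₂ • ω)| ≤ ∫ t in r₂..r₁, ‖fderiv ℝ φ (t • ω)‖ := by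
    rw [heq]
    calc |∫ t in r₂..r₁, (fderiv ℝ φ (t • ω)) ω|
        ≤ ∫ t in r₂..r₁, ‖(fderiv ℝ φ (t • ω)) ω‖ := by
          simpa using intervalIntegral.abs_integral_le_integral_abs hr
      _ ≤ ∫ t in r₂..r₁, ‖fderiv ℝ φ (t • ω)‖ := by
          apply intervalIntegral.integral_mono_on hr (hcont'.norm.intervalIntegrable _ _)
            (hg.intervalIntegrable _ _)
          intro t _
          simpa [hω] using (fderiv ℝ φ (t • ω)).le_opNorm ω
  calc ENNReal.ofReal |φ (r₁ • ω) - φ (r₂ • ω)|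
      ≤ ENNReal.ofReal (∫ t in r₂..r₁, ‖fderiv ℝ φ (t • ω)‖) := ofReal_le_ofReal hb
    _ = ∫⁻ t in Set.Ioc r₂ r₁, ENNReal.ofReal ‖fderiv ℝ φ (t • ω)‖ := by
        rw [intervalIntegral.integral_of_le hr, ofReal_integral_eq_lintegral_ofReal]
        · exact hg.integrableOn_Ioc
        · exact ae_of_all _ fun t => norm_nonneg _

lemma mu_fin_aux {n : ℕ}
    (μ : Measure (Metric.sphere (0 : EuclideanSpace ℝ (Fin n)) 1))
    (hμ : ∀ h : EuclideanSpace ℝ (Fin n) → ℝ≥0∞, Measurable h →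
      (∫⁻ x, h x) = ∫⁻ r in Set.Ioi (0 : ℝ),
        (∫⁻ ω, h (r • (ω : EuclideanSpace ℝ (Fin n))) ∂μ) * ENNReal.ofReal (r ^ (n - 1))) :
    μ Set.univ < ⊤ := by
  set f : EuclideanSpace ℝ (Fin n) → ℝ≥0∞ :=
    (Metric.closedBall (0 : EuclideanSpace ℝ (Fin n)) 1).indicator (fun _ => (1 : ℝ≥0∞)) with hf
  have hfm : Measurable f := measurable_const.indicator measurableSet_closedBall
  have h0 := hμ f hfm
  have hL : (∫⁻ x, f x) = volume (Metric.closedBall (0 : EuclideanSpace ℝ (Fin n)) 1) := by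
    rw [hf, lintegral_indicator measurableSet_closedBall]
    simp
  have hkey : μ Set.univ * (ENNReal.ofReal ((2⁻¹ : ℝ) ^ (n - 1)) * ENNReal.ofReal (2⁻¹ : ℝ))
      ≤ volume (Metric.closedBall (0 : EuclideanSpace ℝ (Fin n)) 1) := by
    rw [← hL, h0]
    have hsub : Set.Ioc (2⁻¹ : ℝ) 1 ⊆ Set.Ioi 0 := fun r hr => lt_trans (by norm_num) hr.1
    calc μ Set.univ * (ENNReal.ofReal ((2⁻¹ : ℝ) ^ (n - 1)) * ENNReal.ofReal (2⁻¹ : ℝ))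
        = ∫⁻ _ in Set.Ioc (2⁻¹ : ℝ) 1, μ Set.univ * ENNReal.ofReal ((2⁻¹ : ℝ) ^ (n - 1)) := by
          rw [setLIntegral_const]
          simp [Real.volume_Ioc, mul_assoc]
          norm_num
          congr 2; rw [one_div, ENNReal.ofReal_inv_of_pos two_pos, ENNReal.ofReal_ofNat]
      _ ≤ ∫⁻ r in Set.Ioc (2⁻¹ : ℝ) 1,
            (∫⁻ ω, f (r • (ω : EuclideanSpace ℝ (Fin n))) ∂μ) * ENNReal.ofReal (r ^ (n - 1)) := by
          apply setLIntegral_mono' measurableSet_Ioc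
          intro r hrr
          have hr0 : (0:ℝ) < r := lt_trans (by norm_num) hrr.1
          have hmem : ∀ ω : Metric.sphere (0 : EuclideanSpace ℝ (Fin n)) 1,
              (r • (ω : EuclideanSpace ℝ (Fin n))) ∈
                Metric.closedBall (0 : EuclideanSpace ℝ (Fin n)) 1 := by
            intro ω
            have : ‖(ω : EuclideanSpace ℝ (Fin n))‖ = 1 := by
              simp [mem_sphere_zero_iff_norm.mp ω.2]
            simp [Metric.mem_closedBall, dist_eq_norm, norm_smul, this, abs_of_pos hr0, hrr.2]
          have hfv : ∀ ω : Metric.sphere (0 : EuclideanSpace ℝ (Fin n)) 1,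
              f (r • (ω : EuclideanSpace ℝ (Fin n))) = 1 := fun ω => by
            rw [hf, Set.indicator_of_mem (hmem ω)]
          apply mul_le_mul'
          · rw [lintegral_congr hfv]; simp
          · exact ofReal_le_ofReal (pow_le_pow_left₀ (by norm_num) (le_of_lt hrr.1) _)
      _ ≤ _ := lintegral_mono_set hsub
  have hvol : volume (Metric.closedBall (0 : EuclideanSpace ℝ (Fin n)) 1) < ⊤ :=
    measure_closedBall_lt_top
  by_contra hcon
  push_neg at hcon
  have : μ Set.univ = ⊤ := top_le_iff.mp hcon
  rw [this, ENNReal.top_mul (mul_ne_zero (by simp) (by simp))] at hkey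
  exact absurd hkey (by simp [hvol.ne])

/-- Fundamental-theorem-of-calculus/polar-coordinates estimate: for a `C¹` function `φ`,
the integral over a spherical cap `A` of the oscillation `|φ(r₁ω) − φ(r₂ω)|` is bounded by
the integral of `‖∇φ(x)‖·‖x‖^{1−n}` over the spherical sector over `A` between the radii
`r₂` and `r₁`. Here `μ` is the surface measure on the unit sphere, normalized so that
Lebesgue measure has the polar decomposition
`∫ h dx = ∫_0^∞ ∫_{S^{n−1}} h(rω) r^{n−1} dμ(ω) dr`. -/
theorem radial_oscillation_le_cone_integral {n : ℕ} (hn : 2 ≤ n)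
    (φ : EuclideanSpace ℝ (Fin n) → ℝ) (hφ : ContDiff ℝ 1 φ)
    (r₁ r₂ : ℝ) (hr₂ : 0 < r₂) (hr : r₂ < r₁)
    (μ : Measure (Metric.sphere (0 : EuclideanSpace ℝ (Fin n)) 1))
    (hμ : ∀ h : EuclideanSpace ℝ (Fin n) → ℝ≥0∞, Measurable h →
      (∫⁻ x, h x) = ∫⁻ r in Set.Ioi (0 : ℝ),
        (∫⁻ ω, h (r • (ω : EuclideanSpace ℝ (Fin n))) ∂μ) * ENNReal.ofReal (r ^ (n - 1)))
    (A : Set (Metric.sphere (0 : EuclideanSpace ℝ (Fin n)) 1)) (hA : MeasurableSet A) :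
    (∫⁻ ω in A, ENNReal.ofReal
        |φ (r₁ • (ω : EuclideanSpace ℝ (Fin n))) - φ (r₂ • (ω : EuclideanSpace ℝ (Fin n)))| ∂μ)
      ≤ ∫⁻ x in {x : EuclideanSpace ℝ (Fin n) |
            ∃ ω ∈ A, ∃ r : ℝ, r₂ ≤ r ∧ r ≤ r₁ ∧ x = r • (ω : EuclideanSpace ℝ (Fin n))},
          ENNReal.ofReal (‖fderiv ℝ φ x‖ * ‖x‖ ^ ((1 : ℝ) - n)) := by
  haveI : IsFiniteMeasure μ := ⟨mu_fin_aux μ hμ⟩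
  have hφd : Continuous (fderiv ℝ φ) := hφ.continuous_fderiv one_ne_zero
  set g : EuclideanSpace ℝ (Fin n) → ℝ≥0∞ :=
    fun x => ENNReal.ofReal (‖fderiv ℝ φ x‖ * ‖x‖ ^ ((1 : ℝ) - n)) with hgdef
  set B : Set (EuclideanSpace ℝ (Fin n)) := Subtype.val '' A with hBdef
  have hBmeas : MeasurableSet B := (isClosed_sphere.measurableSet).subtype_image hA
  set V : Set (EuclideanSpace ℝ (Fin n)) :=
    (fun x => ‖x‖) ⁻¹' Set.Icc r₂ r₁ ∩
      (fun x : EuclideanSpace ℝ (Fin n) => ‖x‖⁻¹ • x) ⁻¹' B with hVdef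
  have hVmeas : MeasurableSet V :=
    (measurable_norm measurableSet_Icc).inter ((measurable_norm.inv.smul measurable_id) hBmeas)
  have hVU : V ⊆ {x : EuclideanSpace ℝ (Fin n) |
      ∃ ω ∈ A, ∃ r : ℝ, r₂ ≤ r ∧ r ≤ r₁ ∧ x = r • (ω : EuclideanSpace ℝ (Fin n))} := by
    rintro x ⟨hx1, hx2⟩
    obtain ⟨a, haA, hax⟩ := hx2
    have hxne : ‖x‖ ≠ 0 := ne_of_gt (lt_of_lt_of_le hr₂ hx1.1)
    refine ⟨a, haA, ‖x‖, hx1.1, hx1.2, ?_⟩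
    rw [hax, smul_inv_smul₀ hxne]
  have hgmeas : Measurable g := by
    apply Measurable.ennreal_ofReal
    apply Measurable.mul hφd.norm.measurable
    measurability
  have hmemV : ∀ t : ℝ, t ∈ Set.Ioc r₂ r₁ →
      ∀ ω : Metric.sphere (0 : EuclideanSpace ℝ (Fin n)) 1, ω ∈ A →
      (t • (ω : EuclideanSpace ℝ (Fin n))) ∈ V ∧
      ‖t • (ω : EuclideanSpace ℝ (Fin n))‖ = t := by
    intro t ht ω hω
    have ht0 : (0:ℝ) < t := hr₂.trans_le ht.1.le
    have hω1 : ‖(ω : EuclideanSpace ℝ (Fin n))‖ = 1 := by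
      simp [mem_sphere_zero_iff_norm.mp ω.2]
    have hnorm : ‖t • (ω : EuclideanSpace ℝ (Fin n))‖ = t := by
      rw [norm_smul, hω1, mul_one, Real.norm_eq_abs, abs_of_pos ht0]
    refine ⟨⟨by simp [hnorm, ht.1.le, ht.2], ?_⟩, hnorm⟩
    show ‖t • (ω : EuclideanSpace ℝ (Fin n))‖⁻¹ • (t • (ω : EuclideanSpace ℝ (Fin n))) ∈ B
    rw [hnorm, inv_smul_smul₀ ht0.ne']
    exact ⟨ω, hω, rfl⟩
  -- pointwise identity: g(tω) * t^{n-1} = ofReal ‖fderiv φ (tω)‖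
  have hpt : ∀ t : ℝ, t ∈ Set.Ioc r₂ r₁ →
      ∀ ω : Metric.sphere (0 : EuclideanSpace ℝ (Fin n)) 1, ω ∈ A →
      g (t • (ω : EuclideanSpace ℝ (Fin n))) * ENNReal.ofReal (t ^ (n - 1))
        = ENNReal.ofReal ‖fderiv ℝ φ (t • (ω : EuclideanSpace ℝ (Fin n)))‖ := by
    intro t ht ω hω
    have ht0 : (0:ℝ) < t := hr₂.trans_le ht.1.le
    have hnorm := (hmemV t ht ω hω).2
    have hpow : t ^ ((1:ℝ) - n) * t ^ (n - 1 : ℕ) = 1 := by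
      have h1 : (t : ℝ) ^ (n - 1 : ℕ) = t ^ (((n:ℝ)) - 1) := by
        rw [← Real.rpow_natCast t (n-1), Nat.cast_sub (le_trans one_le_two hn)]
        norm_num
      rw [h1, ← Real.rpow_add ht0]
      norm_num
    rw [hgdef]
    simp only [hnorm]
    rw [← ENNReal.ofReal_mul (by positivity), mul_assoc, hpow, mul_one]
  calc (∫⁻ ω in A, ENNReal.ofReal
        |φ (r₁ • (ω : EuclideanSpace ℝ (Fin n))) - φ (r₂ • (ω : EuclideanSpace ℝ (Fin n)))| ∂μ)
      ≤ ∫⁻ ω in A, ∫⁻ t in Set.Ioc r₂ r₁,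
          ENNReal.ofReal ‖fderiv ℝ φ (t • (ω : EuclideanSpace ℝ (Fin n)))‖ ∂volume ∂μ := by
        apply lintegral_mono
        intro ω
        exact ftc_aux φ hφ hr.le _ (by simp [mem_sphere_zero_iff_norm.mp ω.2])
    _ = ∫⁻ t in Set.Ioc r₂ r₁, ∫⁻ ω in A,
          ENNReal.ofReal ‖fderiv ℝ φ (t • (ω : EuclideanSpace ℝ (Fin n)))‖ ∂μ ∂volume := by
        have hFc : Continuous fun p : (Metric.sphere (0 : EuclideanSpace ℝ (Fin n)) 1) × ℝ =>
            ENNReal.ofReal ‖fderiv ℝ φ (p.2 • (p.1 : EuclideanSpace ℝ (Fin n)))‖ := by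
          apply ENNReal.continuous_ofReal.comp
          apply Continuous.norm
          exact hφd.comp (continuous_snd.smul (continuous_subtype_val.comp continuous_fst))
        exact lintegral_lintegral_swap hFc.measurable.aemeasurable
    _ ≤ ∫⁻ t in Set.Ioc r₂ r₁,
          (∫⁻ ω, V.indicator g (t • (ω : EuclideanSpace ℝ (Fin n))) ∂μ)
            * ENNReal.ofReal (t ^ (n - 1)) := by
        apply setLIntegral_mono' measurableSet_Ioc
        intro t ht
        calc (∫⁻ ω in A, ENNReal.ofReal ‖fderiv ℝ φ (t • (ω : EuclideanSpace ℝ (Fin n)))‖ ∂μ)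
            = ∫⁻ ω in A, V.indicator g (t • (ω : EuclideanSpace ℝ (Fin n)))
                * ENNReal.ofReal (t ^ (n - 1)) ∂μ := by
              apply setLIntegral_congr_fun hA
              intro ω hω
              dsimp only
              rw [Set.indicator_of_mem (hmemV t ht ω hω).1, hpt t ht ω hω]
          _ = (∫⁻ ω in A, V.indicator g (t • (ω : EuclideanSpace ℝ (Fin n))) ∂μ)
                * ENNReal.ofReal (t ^ (n - 1)) :=
              lintegral_mul_const' _ _ ofReal_ne_top
          _ ≤ _ := by
              apply mul_le_mul' (setLIntegral_le_lintegral _ _) le_rfl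
    _ ≤ ∫⁻ t in Set.Ioi (0:ℝ),
          (∫⁻ ω, V.indicator g (t • (ω : EuclideanSpace ℝ (Fin n))) ∂μ)
            * ENNReal.ofReal (t ^ (n - 1)) := by
        apply lintegral_mono_set
        intro t ht
        exact hr₂.trans ht.1
    _ = ∫⁻ x, V.indicator g x := (hμ _ (hgmeas.indicator hVmeas)).symm
    _ = ∫⁻ x in V, g x := lintegral_indicator hVmeas g
    _ ≤ _ := lintegral_mono' (Measure.restrict_mono hVU le_rfl) le_rfl
end

section
/- Let n ≥ 2, let 0 < θ < 1, and let x₁, x₂ ∈ ℝⁿ \ {0} satisfy ‖x₂‖ ≤ θ·‖x₁‖. Write r₁ := ‖x₁‖ and r₂ := ‖x₂‖. Then there exist a two-dimensional linear subspace P ⊆ ℝⁿ with x₁ ∈ P and x₂ ∈ P, and a Lipschitz continuous curve γ : [r₂, r₁] → ℝⁿ such that: γ(r₂) = x₂, γ(r₁) = x₁, γ(r) ∈ P and ‖γ(r)‖ = r for every r ∈ [r₂, r₁] (so γ meets each sphere centered at 0 of radius between r₂ and r₁ exactly once), and the length of γ (its total variation over [r₂, r₁]) is at most (1 + 2π/(1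 − θ))·‖x₁ − x₂‖. -/
open Metric Set

open Set

lemma lipexp : LipschitzWith 1 (fun t : ℝ => Complex.exp (t * Complex.I)) := by
  have hd : ∀ t : ℝ, HasDerivAt (fun t : ℝ => Complex.exp (t * Complex.I))
      (Complex.exp (t * Complex.I) * (1 * Complex.I)) t := fun t =>
    ((Complex.ofRealCLM.hasDerivAt (x := t)).mul_const Complex.I).cexp
  apply lipschitzWith_of_nnnorm_deriv_le (fun t => (hd t).differentiableAt)
  intro t
  rw [(hd t).deriv]
  simp [← NNReal.coe_le_coe, Complex.norm_exp_ofReal_mul_I]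

lemma spiral (z₁ z₂ : ℂ) (hz₁ : z₁ ≠ 0) (hz₂ : z₂ ≠ 0) (hlt : ‖z₂‖ < ‖z₁‖) :
    ∃ g : ℝ → ℂ, g ‖z₂‖ = z₂ ∧ g ‖z₁‖ = z₁ ∧ (∀ r ∈ Icc ‖z₂‖ ‖z₁‖, ‖g r‖ = r) ∧
      ∃ L : ℝ, 0 ≤ L ∧ L * (‖z₁‖ - ‖z₂‖) ≤ (‖z₁‖ - ‖z₂‖) + Real.pi * ‖z₁‖ ∧
        LipschitzOnWith L.toNNReal g (Icc ‖z₂‖ ‖z₁‖) := by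
  set r₁ := ‖z₁‖
  set r₂ := ‖z₂‖
  have hr₂ : 0 < r₂ := norm_pos_iff.2 hz₂
  have hr₁ : 0 < r₁ := norm_pos_iff.2 hz₁
  have hsub : 0 < r₁ - r₂ := by linarith
  set δ : ℝ := (z₁ / z₂).arg with hδ
  set c : ℝ := δ / (r₁ - r₂) with hc
  set g : ℝ → ℂ := fun r => (↑r / ↑r₂) * z₂ * Complex.exp (↑(c * (r - r₂)) * Complex.I) with hg
  have hz₂' : (z₂ : ℂ) ≠ 0 := hz₂
  have habs : ‖z₁ / z₂‖ = r₁ / r₂ := by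
    simp [norm_div, r₁, r₂]
  have key : (↑(r₁ / r₂) : ℂ) * Complex.exp (↑δ * Complex.I) = z₁ / z₂ := by
    rw [← habs]; exact Complex.norm_mul_exp_arg_mul_I _
  have hnE : ∀ t : ℝ, ‖Complex.exp (↑t * Complex.I)‖ = 1 := fun t =>
    Complex.norm_exp_ofReal_mul_I t
  refine ⟨g, ?_, ?_, ?_, ?_⟩
  · simp [hg, hr₂.ne', div_self, Complex.ofReal_ne_zero]
  · have hcr : c * (r₁ - r₂) = δ := by rw [hc, div_mul_cancel₀ _ hsub.ne']
    have : g r₁ = ((↑(r₁ / r₂) : ℂ) * Complex.exp (↑δ * Complex.I)) * z₂ := by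
      rw [hg]; simp only [hcr]; push_cast; ring
    rw [this, key, div_mul_cancel₀ _ hz₂']
  · intro r hr
    have hr0 : 0 ≤ r := le_trans hr₂.le hr.1
    rw [hg]
    simp only [norm_mul, norm_div, Complex.norm_real, hnE, mul_one, Real.norm_eq_abs,
      abs_of_nonneg hr0, abs_of_pos hr₂]
    rw [show ‖z₂‖ = r₂ from rfl]
    field_simp
  · refine ⟨1 + r₁ * |c|, by positivity, ?_, ?_⟩
    · have hδle : |δ| ≤ Real.pi := Complex.abs_arg_le_pi _
      have : |c| * (r₁ - r₂) = |δ| := by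
        rw [hc, abs_div, abs_of_pos hsub]; field_simp
      nlinarith [abs_nonneg c, hr₁]
    · rw [lipschitzOnWith_iff_dist_le_mul]
      intro r hr s hs
      have hL0 : (0:ℝ) ≤ 1 + r₁ * |c| := by positivity
      rw [Real.coe_toNNReal _ hL0, dist_eq_norm, dist_eq_norm]
      set Er := Complex.exp (↑(c * (r - r₂)) * Complex.I) with hEr'
      set Es := Complex.exp (↑(c * (s - r₂)) * Complex.I) with hEs'
      have hdiff : g r - g s = (z₂ / ↑r₂) * ((↑r - ↑s) * Er + ↑s * (Er - Es)) := by
        simp only [hg]; ring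
      have hnz : ‖z₂ / (↑r₂ : ℂ)‖ = 1 := by
        rw [norm_div, Complex.norm_real, Real.norm_eq_abs, abs_of_pos hr₂]
        exact div_self hr₂.ne'
      have hEE : ‖Er - Es‖ ≤ |c| * |r - s| := by
        have h5 := lipexp.dist_le_mul (c * (r - r₂)) (c * (s - r₂))
        simp only [NNReal.coe_one, one_mul, dist_eq_norm, Real.dist_eq] at h5
        calc ‖Er - Es‖ ≤ |c * (r - r₂) - c * (s - r₂)| := h5
          _ = |c| * |r - s| := by
              rw [show c * (r - r₂) - c * (s - r₂) = c * (r - s) by ring, abs_mul]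
      have h1 : ‖(↑r - ↑s : ℂ) * Er‖ = |r - s| := by
        rw [norm_mul, show ‖Er‖ = 1 from hnE _, mul_one, ← Complex.ofReal_sub,
          Complex.norm_real, Real.norm_eq_abs]
      have h2 : ‖(↑s : ℂ) * (Er - Es)‖ ≤ r₁ * (|c| * |r - s|) := by
        rw [norm_mul, Complex.norm_real, Real.norm_eq_abs, abs_of_nonneg (le_trans hr₂.le hs.1)]
        exact mul_le_mul hs.2 hEE (norm_nonneg _) hr₁.le
      calc ‖g r - g s‖ = ‖(↑r - ↑s : ℂ) * Er + ↑s * (Er - Es)‖ := by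
            rw [hdiff, norm_mul, hnz, one_mul]
        _ ≤ ‖(↑r - ↑s : ℂ) * Er‖ + ‖(↑s : ℂ) * (Er - Es)‖ := norm_add_le _ _
        _ ≤ |r - s| + r₁ * (|c| * |r - s|) := by rw [h1]; gcongr
        _ ≤ (1 + r₁ * |c|) * ‖r - s‖ := by rw [Real.norm_eq_abs]; nlinarith [abs_nonneg (r - s), hr₁]

open Metric Set


/-- Two nonzero points of `ℝⁿ` (`n ≥ 2`) on spheres whose radii are separated by the
lacunarity factor `θ` can be joined, within a two-dimensional subspace containing both,
by a Lipschitz curve parametrized by the distance to the origin (meeting each intermediate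
sphere exactly once) whose length is at most `(1 + 2π/(1−θ))·‖x₁ − x₂‖`. -/
theorem curve_between_lacunary_spheres {n : ℕ} (hn : 2 ≤ n)
    (θ : ℝ) (hθ0 : 0 < θ) (hθ1 : θ < 1)
    (x₁ x₂ : EuclideanSpace ℝ (Fin n)) (hx₁ : x₁ ≠ 0) (hx₂ : x₂ ≠ 0)
    (hlac : ‖x₂‖ ≤ θ * ‖x₁‖) :
    ∃ P : Submodule ℝ (EuclideanSpace ℝ (Fin n)),
      Module.finrank ℝ P = 2 ∧ x₁ ∈ P ∧ x₂ ∈ P ∧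
      ∃ γ : ℝ → EuclideanSpace ℝ (Fin n),
        (∃ K : NNReal, LipschitzOnWith K γ (Set.Icc ‖x₂‖ ‖x₁‖)) ∧
        γ ‖x₂‖ = x₂ ∧ γ ‖x₁‖ = x₁ ∧
        (∀ r ∈ Set.Icc ‖x₂‖ ‖x₁‖, γ r ∈ P ∧ ‖γ r‖ = r) ∧
        eVariationOn γ (Set.Icc ‖x₂‖ ‖x₁‖) ≤
          ENNReal.ofReal ((1 + 2 * Real.pi / (1 - θ)) * ‖x₁ - x₂‖) := by
  -- basic facts
  have hr₁ : 0 < ‖x₁‖ := norm_pos_iff.2 hx₁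
  have hr₂ : 0 < ‖x₂‖ := norm_pos_iff.2 hx₂
  have hlt : ‖x₂‖ < ‖x₁‖ := lt_of_le_of_lt hlac (by nlinarith)
  -- the 2-dimensional subspace
  obtain ⟨P, hP, hm₁, hm₂⟩ : ∃ P : Submodule ℝ (EuclideanSpace ℝ (Fin n)),
      Module.finrank ℝ P = 2 ∧ x₁ ∈ P ∧ x₂ ∈ P := by
    have key : ∃ y : EuclideanSpace ℝ (Fin n),
        LinearIndependent ℝ ![y, x₁] ∧ x₂ ∈ Submodule.span ℝ {y, x₁} := by
      by_cases h : x₂ ∈ Submodule.span ℝ {x₁}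
      · have hne : Submodule.span ℝ {x₁} ≠ ⊤ := by
          intro htop
          have h1 : Module.finrank ℝ
              (Submodule.span ℝ ({x₁} : Set (EuclideanSpace ℝ (Fin n)))) = 1 :=
            finrank_span_singleton hx₁
          rw [htop, finrank_top] at h1
          simp [finrank_euclideanSpace] at h1
          omega
        obtain ⟨y, hy⟩ : ∃ y, y ∉ Submodule.span ℝ {x₁} := by
          by_contra hc
          push_neg at hc
          exact hne (Submodule.eq_top_iff'.2 hc)
        refine ⟨y, ?_, ?_⟩
        · rw [linearIndependent_fin2]
          refine ⟨hx₁, fun a ha => hy ?_⟩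
          simp only [Matrix.cons_val_one, Matrix.head_cons, Matrix.cons_val_zero] at ha
          rw [← ha]
          exact Submodule.smul_mem _ _ (Submodule.mem_span_singleton_self x₁)
        · exact Submodule.span_mono (by simp) h
      · refine ⟨x₂, ?_, Submodule.subset_span (by simp)⟩
        rw [linearIndependent_fin2]
        refine ⟨hx₁, fun a ha => h ?_⟩
        simp only [Matrix.cons_val_one, Matrix.head_cons, Matrix.cons_val_zero] at ha
        rw [← ha]
        exact Submodule.smul_mem _ _ (Submodule.mem_span_singleton_self x₁)
    obtain ⟨y, hind, hsp⟩ := key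
    refine ⟨Submodule.span ℝ {y, x₁}, ?_, Submodule.subset_span (by simp), hsp⟩
    have h2 := finrank_span_eq_card hind
    rw [show Set.range ![y, x₁] = {y, x₁} by
      ext z; simp [Matrix.range_cons, Matrix.range_empty, or_comm]] at h2
    exact h2
  -- isometry with ℂ
  let e : ℂ ≃ₗᵢ[ℝ] P := Complex.orthonormalBasisOneI.repr.trans
    (((stdOrthonormalBasis ℝ P).reindex (finCongr hP)).repr.symm)
  set z₁ : ℂ := e.symm ⟨x₁, hm₁⟩ with hz₁def
  set z₂ : ℂ := e.symm ⟨x₂, hm₂⟩ with hz₂def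
  have hnz₁ : ‖z₁‖ = ‖x₁‖ := by rw [hz₁def, e.symm.norm_map]; rfl
  have hnz₂ : ‖z₂‖ = ‖x₂‖ := by rw [hz₂def, e.symm.norm_map]; rfl
  have hz₁0 : z₁ ≠ 0 := by
    intro h; apply hx₁
    have := congrArg (fun z => ((e z : P) : EuclideanSpace ℝ (Fin n))) h
    simpa [hz₁def] using this
  have hz₂0 : z₂ ≠ 0 := by
    intro h; apply hx₂
    have := congrArg (fun z => ((e z : P) : EuclideanSpace ℝ (Fin n))) h
    simpa [hz₂def] using this
  have hltz : ‖z₂‖ < ‖z₁‖ := by rw [hnz₁, hnz₂]; exact hlt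
  obtain ⟨g, hg₂, hg₁, hgn, L, hL0, hLle, hglip⟩ := spiral z₁ z₂ hz₁0 hz₂0 hltz
  rw [hnz₁] at hg₁ hgn hglip hLle
  rw [hnz₂] at hg₂ hgn hglip hLle
  set γ : ℝ → EuclideanSpace ℝ (Fin n) := fun r => ((e (g r) : P) : EuclideanSpace ℝ (Fin n))
    with hγdef
  have hiso : LipschitzWith 1 (fun z : ℂ => ((e z : P) : EuclideanSpace ℝ (Fin n))) :=
    ((Submodule.subtypeₗᵢ P).comp e.toLinearIsometry).lipschitz
  have hγlip : LipschitzOnWith L.toNNReal γ (Set.Icc ‖x₂‖ ‖x₁‖) := by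
    have := hiso.comp_lipschitzOnWith hglip
    simpa [hγdef, Function.comp_def] using this
  refine ⟨P, hP, hm₁, hm₂, γ, ⟨L.toNNReal, hγlip⟩, ?_, ?_, ?_, ?_⟩
  · rw [hγdef]; simp only [hg₂, hz₂def, e.apply_symm_apply]
  · rw [hγdef]; simp only [hg₁, hz₁def, e.apply_symm_apply]
  · intro r hr
    refine ⟨SetLike.coe_mem _, ?_⟩
    have : ‖((e (g r) : P) : EuclideanSpace ℝ (Fin n))‖ = ‖g r‖ := by
      rw [show ‖((e (g r) : P) : EuclideanSpace ℝ (Fin n))‖ = ‖e (g r)‖ from rfl, e.norm_map]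
    rw [hγdef]
    simp only [this]
    exact hgn r hr
  · -- variation bound
    have hvar : eVariationOn γ (Set.Icc ‖x₂‖ ‖x₁‖) ≤
        ENNReal.ofReal L * ENNReal.ofReal (‖x₁‖ - ‖x₂‖) := by
      have h1 : eVariationOn (γ ∘ id) (Set.Icc ‖x₂‖ ‖x₁‖) ≤
          L.toNNReal * eVariationOn id (Set.Icc ‖x₂‖ ‖x₁‖) :=
        hγlip.comp_eVariationOn_le (mapsTo_id _)
      have h2 : eVariationOn (id : ℝ → ℝ) (Set.Icc ‖x₂‖ ‖x₁‖) ≤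
          ENNReal.ofReal (‖x₁‖ - ‖x₂‖) := by
        have := (monotoneOn_id (s := Set.Icc ‖x₂‖ ‖x₁‖)).eVariationOn_le
          (Set.left_mem_Icc.2 hlt.le) (Set.right_mem_Icc.2 hlt.le)
        simpa [Set.inter_self] using this
      calc eVariationOn γ (Set.Icc ‖x₂‖ ‖x₁‖)
          = eVariationOn (γ ∘ id) (Set.Icc ‖x₂‖ ‖x₁‖) := by rw [Function.comp_id]
        _ ≤ L.toNNReal * eVariationOn id (Set.Icc ‖x₂‖ ‖x₁‖) := h1
        _ ≤ ENNReal.ofReal L * ENNReal.ofReal (‖x₁‖ - ‖x₂‖) := by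
            rw [ENNReal.ofReal]
            exact mul_le_mul_right h2 _
    refine hvar.trans ?_
    rw [← ENNReal.ofReal_mul hL0]
    apply ENNReal.ofReal_le_ofReal
    -- real arithmetic
    set D := ‖x₁ - x₂‖ with hD
    have hD1 : ‖x₁‖ - ‖x₂‖ ≤ D := norm_sub_norm_le x₁ x₂
    have hD0 : 0 ≤ D := norm_nonneg _
    have hθr : (1 - θ) * ‖x₁‖ ≤ D := by nlinarith
    have hπ : Real.pi * ‖x₁‖ ≤ 2 * Real.pi / (1 - θ) * D := by
      rw [div_mul_eq_mul_div, le_div_iff₀ (by linarith : (0:ℝ) < 1 - θ)]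
      nlinarith [Real.pi_pos]
    calc L * (‖x₁‖ - ‖x₂‖) ≤ (‖x₁‖ - ‖x₂‖) + Real.pi * ‖x₁‖ := hLle
      _ ≤ D + 2 * Real.pi / (1 - θ) * D := by linarith
      _ = (1 + 2 * Real.pi / (1 - θ)) * D := by ring
end
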